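/- There is no (·,+)-affine embedding of [0,1] into ℝ: there is no continuous injective map s : [0,1] → ℝ satisfying s(max(λ·x, y)) = max(ln λ + s(x), s(y)) for all λ ∈ [0,1] and x, y ∈ [0,1] (with ln 0 = -∞ and -∞ + r = -∞). -/
import Mathlib


/-- The extended logarithm `[0,1] → [-∞,0] ⊆ EReal`, with `ln 0 = -∞`. -/
noncomputable def elog (x : ℝ) : EReal :=
  if x = 0 then ⊥ else ((Real.log x : ℝ) : EReal)

/-- there is no (·,+)-affine embedding of `[0,1]` into `ℝ`, i.e.
no continuous injective map `s : [0,1] → ℝ` with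
`s (max (λ·x) y) = max (ln λ + s x) (s y)` for all `λ, x, y ∈ [0,1]`
(conventions `ln 0 = -∞`, `-∞ + r = -∞`, `max (-∞) r = r`). -/
theorem no_dotPlus_affine_embedding_unitInterval :
    ¬ ∃ s : ℝ → ℝ,
        ContinuousOn s (Set.Icc (0 : ℝ) 1) ∧
        Set.InjOn s (Set.Icc (0 : ℝ) 1) ∧
        ∀ lam ∈ Set.Icc (0 : ℝ) 1, ∀ x ∈ Set.Icc (0 : ℝ) 1,
          ∀ y ∈ Set.Icc (0 : ℝ) 1,
            ((s (max (lam * x) y) : ℝ) : EReal) =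
              max (elog lam + (s x : ℝ)) ((s y : ℝ) : EReal) := by
  rintro ⟨s, -, hinj, hs⟩
  have h0 : (0 : ℝ) ∈ Set.Icc (0 : ℝ) 1 := by constructor <;> norm_num
  have h1 : (1 : ℝ) ∈ Set.Icc (0 : ℝ) 1 := by constructor <;> norm_num
  -- First, s 0 ≤ s 1
  have e1 : ((s 1 : ℝ) : EReal) = max (elog 1 + (s 1 : ℝ)) ((s 0 : ℝ) : EReal) := by
    have := hs 1 h1 1 h1 0 h0
    simpa using this
  have helog1 : elog 1 = (0 : EReal) := by simp [elog, Real.log_one]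
  rw [helog1, zero_add] at e1
  have hs01 : s 0 ≤ s 1 := by
    by_contra h
    push_neg at h
    have : ((s 1 : ℝ) : EReal) = ((s 0 : ℝ) : EReal) := by
      rw [e1, max_eq_right]
      exact_mod_cast h.le
    have : s 1 = s 0 := by exact_mod_cast this
    linarith
  -- Choose lam = exp (s 0 - s 1 - 1) ∈ (0, 1]
  set lam : ℝ := Real.exp (s 0 - s 1 - 1) with hlam
  have hlampos : 0 < lam := Real.exp_pos _
  have hlamle : lam ≤ 1 := by
    rw [hlam]
    apply Real.exp_le_one_iff.mpr
    linarith
  have hlammem : lam ∈ Set.Icc (0 : ℝ) 1 := ⟨hlampos.le, hlamle⟩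
  have hlog : Real.log lam = s 0 - s 1 - 1 := Real.log_exp _
  have e2 := hs lam hlammem 1 h1 0 h0
  rw [mul_one] at e2
  have hmaxlam : max lam 0 = lam := max_eq_left hlampos.le
  rw [hmaxlam] at e2
  have helam : elog lam = ((Real.log lam : ℝ) : EReal) := by
    simp [elog, hlampos.ne']
  rw [helam, ← EReal.coe_add, hlog] at e2
  have hlt : ((s 0 - s 1 - 1 + s 1 : ℝ) : EReal) ≤ ((s 0 : ℝ) : EReal) := by
    apply EReal.coe_le_coe_iff.mpr
    linarith
  rw [max_eq_right hlt] at e2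
  have : s lam = s 0 := by exact_mod_cast e2
  have := hinj hlammem h0 this
  exact hlampos.ne' this
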